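/- The dual optimizer satisfies the norm bound ‖λ*c − μ*eₙ‖ ≤ (1 + d_max/d_min)·‖v‖, where d_max = max(d₁,…,dₙ), d_min = min(d₁,…,dₙ), and ‖·‖ is the Euclidean norm on ℝⁿ. -/

import Mathlib

open Finset

noncomputable section

namespace Stmt4

/-- The last index of `Fin (n+2)`. -/
def lastIdx (n : ℕ) : Fin (n + 2) := Fin.last (n + 1)

variable {n : ℕ}

/-- The Euclidean norm of a vector in `ℝ^m`. -/
def enorm {m : ℕ} (z : Fin m → ℝ) : ℝ := Real.sqrt (∑ i, z i ^ 2)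

/-- `d_min = min(d₁,…,dₙ)`. -/
def dMin (d : Fin (n + 2) → ℝ) : ℝ := Finset.univ.inf' Finset.univ_nonempty d

/-- `d_max = max(d₁,…,dₙ)`. -/
def dMax (d : Fin (n + 2) → ℝ) : ℝ := Finset.univ.sup' Finset.univ_nonempty d

/-- The `n`-th standard basis vector `eₙ`. -/
def eVec (n : ℕ) : Fin (n + 2) → ℝ := fun i => if i = lastIdx n then 1 else 0

/-- `c^⊤ D⁻¹ v` for the diagonal matrix `D = diag d`. -/
def cDv (d v c : Fin (n + 2) → ℝ) : ℝ := ∑ i, c i * v i / d i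

/-- `c^⊤ D⁻¹ c` for the diagonal matrix `D = diag d`. -/
def cDc (d c : Fin (n + 2) → ℝ) : ℝ := ∑ i, c i * c i / d i

/-- The indicator `1_A`. -/
def indA (d v c : Fin (n + 2) → ℝ) : ℝ :=
  if v (lastIdx n) - cDv d v c / cDc d c * c (lastIdx n) < 0 then 1 else 0

/-- `λ*`. -/
def lamStar (d v c : Fin (n + 2) → ℝ) : ℝ :=
  (cDv d v c - c (lastIdx n) * v (lastIdx n) / d (lastIdx n) * indA d v c) /
    (cDc d c - c (lastIdx n) ^ 2 / d (lastIdx n) * indA d v c)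

/-- `μ* = max (-(vₙ - λ* cₙ)) 0`. -/
def muStar (d v c : Fin (n + 2) → ℝ) : ℝ :=
  max (-(v (lastIdx n) - lamStar d v c * c (lastIdx n))) 0

/-! ### Auxiliary lemmas -/

lemma dMin_pos (d : Fin (n + 2) → ℝ) (hd : ∀ i, 0 < d i) : 0 < dMin d := by
  rw [dMin, Finset.lt_inf'_iff]
  exact fun i _ => hd i

lemma dMin_le (d : Fin (n + 2) → ℝ) (i : Fin (n + 2)) : dMin d ≤ d i :=
  Finset.inf'_le _ (Finset.mem_univ i)

lemma le_dMax (d : Fin (n + 2) → ℝ) (i : Fin (n + 2)) : d i ≤ dMax d :=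
  Finset.le_sup' _ (Finset.mem_univ i)

/-- Weighted Cauchy–Schwarz. -/
lemma weighted_cs (d v c : Fin (n + 2) → ℝ) (hd : ∀ i, 0 < d i)
    (s : Finset (Fin (n + 2))) :
    (∑ i ∈ s, c i * v i / d i) ^ 2 ≤
      (∑ i ∈ s, c i * c i / d i) * (∑ i ∈ s, v i * v i / d i) := by
  have h := sum_mul_sq_le_sq_mul_sq s (fun i => c i / Real.sqrt (d i))
    (fun i => v i / Real.sqrt (d i))
  have e1 : ∀ i ∈ s, c i / Real.sqrt (d i) * (v i / Real.sqrt (d i)) = c i * v i / d i := by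
    intro i _
    rw [div_mul_div_comm, Real.mul_self_sqrt (hd i).le]
  have e2 : ∀ i ∈ s, (c i / Real.sqrt (d i)) ^ 2 = c i * c i / d i := by
    intro i _
    rw [div_pow, Real.sq_sqrt (hd i).le]; ring
  have e3 : ∀ i ∈ s, (v i / Real.sqrt (d i)) ^ 2 = v i * v i / d i := by
    intro i _
    rw [div_pow, Real.sq_sqrt (hd i).le]; ring
  rwa [Finset.sum_congr rfl e1, Finset.sum_congr rfl e2, Finset.sum_congr rfl e3] at h

/-- Key bound: `(A/B)^2 * ∑ c² ≤ (dMax/dMin) * ∑ v²` over any index set. -/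
lemma key_bound (d v c : Fin (n + 2) → ℝ) (hd : ∀ i, 0 < d i)
    (s : Finset (Fin (n + 2)))
    (hB : 0 < ∑ i ∈ s, c i * c i / d i) :
    ((∑ i ∈ s, c i * v i / d i) / (∑ i ∈ s, c i * c i / d i)) ^ 2 * (∑ i ∈ s, c i ^ 2)
      ≤ dMax d / dMin d * ∑ i ∈ s, v i ^ 2 := by
  set A := ∑ i ∈ s, c i * v i / d i with hA
  set B := ∑ i ∈ s, c i * c i / d i with hBdef
  set C := ∑ i ∈ s, c i ^ 2 with hC
  set Vs := ∑ i ∈ s, v i * v i / d i with hVs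
  set W := ∑ i ∈ s, v i ^ 2 with hW
  have hdmin := dMin_pos d hd
  have hdmax : 0 < dMax d := lt_of_lt_of_le hdmin (le_trans (dMin_le d ⟨0, by omega⟩) (le_dMax d _))
  have hcs : A ^ 2 ≤ B * Vs := weighted_cs d v c hd s
  have hVsW : Vs * dMin d ≤ W := by
    rw [hVs, hW, Finset.sum_mul]
    refine Finset.sum_le_sum fun i _ => ?_
    rw [div_mul_eq_mul_div, div_le_iff₀ (hd i)]
    have h1 : dMin d ≤ d i := dMin_le d i
    nlinarith [sq_nonneg (v i), sq_abs (v i)]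
  have hCB : C ≤ dMax d * B := by
    rw [hC, hBdef, Finset.mul_sum]
    refine Finset.sum_le_sum fun i _ => ?_
    rw [mul_div_assoc', le_div_iff₀ (hd i)]
    have h1 : d i ≤ dMax d := le_dMax d i
    nlinarith [mul_self_nonneg (c i)]
  have hVs0 : 0 ≤ Vs := Finset.sum_nonneg fun i _ =>
    div_nonneg (mul_self_nonneg _) (hd i).le
  have hC0 : 0 ≤ C := Finset.sum_nonneg fun i _ => sq_nonneg _
  rw [div_pow, div_mul_eq_mul_div, div_le_iff₀ (by positivity), div_mul_eq_mul_div,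
    div_mul_eq_mul_div, le_div_iff₀ hdmin]
  nlinarith [mul_le_mul_of_nonneg_right hcs hC0, mul_le_mul_of_nonneg_left hVsW (by positivity : (0:ℝ) ≤ dMax d * B),
    mul_le_mul_of_nonneg_left hCB (mul_nonneg hVs0 hB.le), sq_nonneg B, mul_nonneg hVs0 hB.le]

lemma enorm_le_of_sq_sum (m : ℕ) (x v : Fin m → ℝ) (r : ℝ) (hr : 0 ≤ r)
    (h : ∑ i, x i ^ 2 ≤ (1 + r) * ∑ i, v i ^ 2) :
    enorm x ≤ (1 + r) * enorm v := by
  have h1 : enorm x ≤ Real.sqrt ((1 + r) * ∑ i, v i ^ 2) := Real.sqrt_le_sqrt h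
  rw [Real.sqrt_mul (by linarith)] at h1
  refine h1.trans (mul_le_mul_of_nonneg_right ?_ (Real.sqrt_nonneg _))
  calc Real.sqrt (1 + r) ≤ Real.sqrt ((1 + r) ^ 2) := Real.sqrt_le_sqrt (by nlinarith)
    _ = 1 + r := Real.sqrt_sq (by linarith)

/-- The dual optimizer satisfies `‖λ* c - μ* eₙ‖ ≤ (1 + d_max/d_min) ‖v‖`. -/
theorem dual_optimizer_norm_bound
    (n : ℕ) (d v c : Fin (n + 2) → ℝ)
    (hd : ∀ i, 0 < d i)
    (hc : ∃ i : Fin (n + 2), i ≠ lastIdx n ∧ c i ≠ 0) :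
    enorm (fun i => lamStar d v c * c i - muStar d v c * eVec n i) ≤
      (1 + dMax d / dMin d) * enorm v := by
  obtain ⟨i₀, hi₀L, hi₀⟩ := hc
  set L := lastIdx n with hL
  have hdmin := dMin_pos d hd
  have hdmax : 0 < dMax d := lt_of_lt_of_le hdmin (le_trans (dMin_le d L) (le_dMax d L))
  have hr : (0:ℝ) ≤ dMax d / dMin d := by positivity
  set r := dMax d / dMin d with hrdef
  have hr1 : 1 ≤ r := by
    rw [hrdef, le_div_iff₀ hdmin, one_mul]
    exact le_trans (dMin_le d L) (le_dMax d L)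
  have hcDc : 0 < cDc d c := by
    rw [cDc]
    refine Finset.sum_pos' (fun i _ => div_nonneg (mul_self_nonneg _) (hd i).le)
      ⟨i₀, Finset.mem_univ _, div_pos (mul_self_pos.mpr hi₀) (hd i₀)⟩
  have hvW : (0:ℝ) ≤ ∑ i, v i ^ 2 := Finset.sum_nonneg fun i _ => sq_nonneg _
  refine enorm_le_of_sq_sum _ _ _ r hr ?_
  by_cases hcond : v L - cDv d v c / cDc d c * c L < 0
  · -- indicator = 1
    have hind : indA d v c = 1 := if_pos hcond
    set s : Finset (Fin (n + 2)) := Finset.univ.erase L with hs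
    have hsplit : ∀ f : Fin (n + 2) → ℝ, ∑ i ∈ s, f i + f L = ∑ i, f i :=
      fun f => Finset.sum_erase_add _ _ (Finset.mem_univ L)
    have hA : cDv d v c - c L * v L / d L * indA d v c = ∑ i ∈ s, c i * v i / d i := by
      rw [hind, mul_one, cDv, ← hsplit (fun i => c i * v i / d i)]; ring
    have hBe : cDc d c - c L ^ 2 / d L * indA d v c = ∑ i ∈ s, c i * c i / d i := by
      rw [hind, mul_one, cDc, ← hsplit (fun i => c i * c i / d i), sq]; ring
    set A := ∑ i ∈ s, c i * v i / d i with hAd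
    set B := ∑ i ∈ s, c i * c i / d i with hBd
    have hB : 0 < B := by
      refine Finset.sum_pos' (fun i _ => div_nonneg (mul_self_nonneg _) (hd i).le)
        ⟨i₀, Finset.mem_erase.mpr ⟨hi₀L, Finset.mem_univ _⟩, div_pos (mul_self_pos.mpr hi₀) (hd i₀)⟩
    have hlam : lamStar d v c = A / B := by rw [lamStar, hA, hBe]
    -- sign identity
    have hsign : v L * B - c L * A < 0 := by
      have h1 : v L * cDc d c - c L * cDv d v c < 0 := by
        have := mul_neg_of_neg_of_pos hcond hcDc
        calc v L * cDc d c - c L * cDv d v c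
            = (v L - cDv d v c / cDc d c * c L) * cDc d c := by
              field_simp
          _ < 0 := this
      have h2 : v L * cDc d c - c L * cDv d v c = v L * B - c L * A := by
        rw [cDc, cDv, ← hsplit (fun i => c i * c i / d i), ← hsplit (fun i => c i * v i / d i),
          ← hBd, ← hAd]
        ring
      linarith [h2 ▸ h1]
    have hneg : v L - lamStar d v c * c L < 0 := by
      rw [hlam, div_mul_eq_mul_div, sub_div' hB.ne']
      exact div_neg_of_neg_of_pos (by linarith) hB
    have hmu : muStar d v c = lamStar d v c * c L - v L := by
      rw [muStar, max_eq_left (by linarith)]; ring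
    -- compute the squared norm
    have hxL : lamStar d v c * c L - muStar d v c * eVec n L = v L := by
      rw [hmu, eVec, if_pos rfl, mul_one]; ring
    have hsum : ∑ i, (lamStar d v c * c i - muStar d v c * eVec n i) ^ 2
        = (lamStar d v c) ^ 2 * (∑ i ∈ s, c i ^ 2) + v L ^ 2 := by
      rw [← hsplit (fun i => (lamStar d v c * c i - muStar d v c * eVec n i) ^ 2), hxL,
        Finset.mul_sum]
      congr 1
      refine Finset.sum_congr rfl fun i hi => ?_
      have hiL : i ≠ L := (Finset.mem_erase.mp hi).1
      rw [eVec, if_neg hiL, mul_zero, sub_zero, mul_pow]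
    rw [hsum, hlam]
    have hk := key_bound d v c hd s hB
    have hle : ∑ i ∈ s, v i ^ 2 + v L ^ 2 = ∑ i, v i ^ 2 := hsplit _
    have hvs : (0:ℝ) ≤ ∑ i ∈ s, v i ^ 2 := Finset.sum_nonneg fun i _ => sq_nonneg _
    nlinarith [sq_nonneg (v L)]
  · -- indicator = 0
    have hind : indA d v c = 0 := if_neg hcond
    have hlam : lamStar d v c = cDv d v c / cDc d c := by
      rw [lamStar, hind, mul_zero, mul_zero, sub_zero, sub_zero]
    have hmu : muStar d v c = 0 := by
      rw [muStar, max_eq_right]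
      rw [hlam]
      push_neg at hcond
      linarith
    have hsum : ∑ i, (lamStar d v c * c i - muStar d v c * eVec n i) ^ 2
        = (lamStar d v c) ^ 2 * (∑ i, c i ^ 2) := by
      rw [Finset.mul_sum]
      refine Finset.sum_congr rfl fun i _ => ?_
      rw [hmu, zero_mul, sub_zero, mul_pow]
    rw [hsum, hlam]
    have hk := key_bound d v c hd Finset.univ (by rw [← cDc]; exact hcDc)
    rw [← cDv, ← cDc] at hk
    nlinarith
end Stmt4
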